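/- A c-matching M in an edge-weighted, vertex-capacitated graph G is maximum-weight if and only if G contains no proper M-augmenting trail. -/

import Mathlib

variable {V : Type*}

/-- Degree of a vertex with respect to an edge set. -/
def degOn [DecidableEq V] (M : Finset (Sym2 V)) (v : V) : ℕ :=
  (M.filter (fun e => v ∈ e)).card

/-- Total weight of an edge set. -/
def wsum (w : Sym2 V → ℝ) (M : Finset (Sym2 V)) : ℝ := ∑ e ∈ M, w e

/-- A `c`-matching: a set of edges of `G` with every vertex degree at most its capacity. -/
def IsCMatching [DecidableEq V] (G : SimpleGraph V) (c : V → ℕ) (M : Finset (Sym2 V)) : Prop :=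
  (∀ e ∈ M, e ∈ G.edgeSet) ∧ ∀ v, degOn M v ≤ c v

/-- A maximum-weight `c`-matching. -/
def IsMaxCMatching [DecidableEq V] (G : SimpleGraph V) (w : Sym2 V → ℝ) (c : V → ℕ)
    (M : Finset (Sym2 V)) : Prop :=
  IsCMatching G c M ∧ ∀ N, IsCMatching G c N → wsum w N ≤ wsum w M

/-- A list of edges is `M`-alternating if consecutive edges alternate
between `M` and its complement. -/
def Alternating [DecidableEq V] (M : Finset (Sym2 V)) (l : List (Sym2 V)) : Prop :=
  l.Chain' (fun e f => (e ∈ M ↔ f ∉ M))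

/-- Weight (with multiplicity) of the matched edges of a list. -/
def matchedWeight [DecidableEq V] (w : Sym2 V → ℝ) (M : Finset (Sym2 V))
    (l : List (Sym2 V)) : ℝ :=
  ((l.filter (fun e => decide (e ∈ M))).map w).sum

/-- Weight (with multiplicity) of the unmatched edges of a list. -/
def unmatchedWeight [DecidableEq V] (w : Sym2 V → ℝ) (M : Finset (Sym2 V))
    (l : List (Sym2 V)) : ℝ :=
  ((l.filter (fun e => decide (e ∉ M))).map w).sum

/-- `M`-augmenting: `w(l \ M) > w(l ∩ M)` (multiplicities counted). -/
def Augmenting [DecidableEq V] (w : Sym2 V → ℝ) (M : Finset (Sym2 V)) (l : List (Sym2 V)) : Prop :=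
  matchedWeight w M l < unmatchedWeight w M l

/-- Fractional degree `Σ_{e ∈ δ(v)} x_e`. -/
def lpDeg [Fintype V] [DecidableEq V] (x : Sym2 V → ℝ) (v : V) : ℝ :=
  ∑ e : Sym2 V, if v ∈ e then x e else 0

/-- A fractional `c`-matching. -/
def IsFracCMatching [Fintype V] [DecidableEq V] (G : SimpleGraph V) (c : V → ℕ)
    (x : Sym2 V → ℝ) : Prop :=
  (∀ e, 0 ≤ x e ∧ x e ≤ 1) ∧ (∀ e, e ∉ G.edgeSet → x e = 0) ∧ ∀ v, lpDeg x v ≤ (c v : ℝ)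

/-- LP objective value `w^T x`. -/
def lpVal [Fintype V] (w x : Sym2 V → ℝ) : ℝ := ∑ e : Sym2 V, w e * x e

/-- `ν^c(G)`: maximum weight of a `c`-matching. -/
noncomputable def nuC [Fintype V] [DecidableEq V] (G : SimpleGraph V) (w : Sym2 V → ℝ)
    (c : V → ℕ) : ℝ :=
  sSup {r | ∃ M, IsCMatching G c M ∧ r = wsum w M}

/-- `ν_f^c(G)`: optimum of the fractional `c`-matching LP. -/
noncomputable def nuF [Fintype V] [DecidableEq V] (G : SimpleGraph V) (w : Sym2 V → ℝ)
    (c : V → ℕ) : ℝ :=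
  sSup {r | ∃ x, IsFracCMatching G c x ∧ r = lpVal w x}

/-- A capacitated graph is stable if `ν^c(G) = ν_f^c(G)`. -/
def Stable [Fintype V] [DecidableEq V] (G : SimpleGraph V) (w : Sym2 V → ℝ) (c : V → ℕ) : Prop :=
  nuC G w c = nuF G w c

/-- The ε-augmentation `x^{M/W}(ε)` of a walk. -/
def epsAug [DecidableEq V] {G : SimpleGraph V} {u v : V} (M : Finset (Sym2 V))
    (p : G.Walk u v) (ε : ℝ) : Sym2 V → ℝ :=
  fun e => if e ∈ M then 1 - (p.edges.count e : ℝ) * ε else (p.edges.count e : ℝ) * ε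

/-- Symmetric difference of edge sets. -/
def symmDiffE [DecidableEq V] (M T : Finset (Sym2 V)) : Finset (Sym2 V) := (M \ T) ∪ (T \ M)

set_option linter.unusedSectionVars false
set_option linter.unnecessarySeqFocus false
set_option maxHeartbeats 1600000

section Bridge
variable [DecidableEq V]

lemma degOn_union_of_disjoint {S T : Finset (Sym2 V)} (h : Disjoint S T) (x : V) :
    degOn (S ∪ T) x = degOn S x + degOn T x := by
  unfold degOn
  rw [Finset.filter_union, Finset.card_union_of_disjoint
    (h.mono (Finset.filter_subset _ _) (Finset.filter_subset _ _))]

lemma degOn_sdiff_add (S T : Finset (Sym2 V)) (x : V) :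
    degOn (S \ T) x + degOn (S ∩ T) x = degOn S x := by
  rw [← degOn_union_of_disjoint (Finset.disjoint_sdiff_inter S T), Finset.sdiff_union_inter]

lemma degOn_mono {S T : Finset (Sym2 V)} (h : S ⊆ T) (x : V) : degOn S x ≤ degOn T x :=
  Finset.card_le_card (Finset.filter_subset_filter _ h)

lemma degOn_symmDiffE (M T : Finset (Sym2 V)) (x : V) :
    degOn (symmDiffE M T) x + degOn (T ∩ M) x = degOn M x + degOn (T \ M) x := by
  unfold symmDiffE
  rw [degOn_union_of_disjoint (by
    refine Finset.disjoint_left.2 ?_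
    intro e he1 he2
    exact (Finset.mem_sdiff.1 he2).2 (Finset.mem_sdiff.1 he1).1)]
  have h1 := degOn_sdiff_add M T x
  have h3 : degOn (M ∩ T) x = degOn (T ∩ M) x := by rw [Finset.inter_comm]
  omega

lemma wsum_union_of_disjoint (w : Sym2 V → ℝ) {S T : Finset (Sym2 V)} (h : Disjoint S T) :
    wsum w (S ∪ T) = wsum w S + wsum w T := by
  unfold wsum; rw [Finset.sum_union h]

lemma wsum_sdiff_add (w : Sym2 V → ℝ) (S T : Finset (Sym2 V)) :
    wsum w (S \ T) + wsum w (S ∩ T) = wsum w S := by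
  rw [← wsum_union_of_disjoint w (Finset.disjoint_sdiff_inter S T), Finset.sdiff_union_inter]

lemma wsum_nonneg {w : Sym2 V → ℝ} (hw : ∀ e, 0 ≤ w e) (S : Finset (Sym2 V)) : 0 ≤ wsum w S :=
  Finset.sum_nonneg fun e _ => hw e

lemma card_filter_toFinset {l : List (Sym2 V)} (hl : l.Nodup) (p : Sym2 V → Bool) :
    (l.toFinset.filter (fun e => p e)).card = l.countP p := by
  rw [← List.toFinset_filter, List.card_toFinset, List.Nodup.dedup (hl.filter p),
    List.countP_eq_length_filter]

lemma sum_filter_toFinset {l : List (Sym2 V)} (hl : l.Nodup) (p : Sym2 V → Bool) (w : Sym2 V → ℝ) :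
    ∑ e ∈ l.toFinset.filter (fun e => p e), w e = ((l.filter p).map w).sum := by
  rw [← List.toFinset_filter, List.sum_toFinset w (hl.filter p)]

def cntA (M : Finset (Sym2 V)) (l : List (Sym2 V)) (x : V) : ℕ :=
  l.countP (fun e => decide (x ∈ e) && decide (e ∈ M))
def cntB (M : Finset (Sym2 V)) (l : List (Sym2 V)) (x : V) : ℕ :=
  l.countP (fun e => decide (x ∈ e) && !decide (e ∈ M))

lemma degOn_inter_eq_cntA (M : Finset (Sym2 V)) {l : List (Sym2 V)} (hl : l.Nodup) (x : V) :
    degOn (l.toFinset ∩ M) x = cntA M l x := by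
  unfold degOn cntA
  rw [← card_filter_toFinset hl (fun e => decide (x ∈ e) && decide (e ∈ M))]
  congr 1
  ext e
  simp only [Finset.mem_filter, Finset.mem_inter, Bool.and_eq_true, decide_eq_true_eq]
  tauto

lemma degOn_sdiff_eq_cntB (M : Finset (Sym2 V)) {l : List (Sym2 V)} (hl : l.Nodup) (x : V) :
    degOn (l.toFinset \ M) x = cntB M l x := by
  unfold degOn cntB
  rw [← card_filter_toFinset hl (fun e => decide (x ∈ e) && !decide (e ∈ M))]
  congr 1
  ext e
  simp only [Finset.mem_filter, Finset.mem_sdiff, Bool.and_eq_true, decide_eq_true_eq,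
    Bool.not_eq_true', decide_eq_false_iff_not]
  tauto

lemma matchedWeight_eq (w : Sym2 V → ℝ) (M : Finset (Sym2 V)) {l : List (Sym2 V)}
    (hl : l.Nodup) : matchedWeight w M l = wsum w (l.toFinset ∩ M) := by
  unfold matchedWeight wsum
  rw [← sum_filter_toFinset hl (fun e => decide (e ∈ M)) w]
  congr 1
  ext e
  simp

lemma unmatchedWeight_eq (w : Sym2 V → ℝ) (M : Finset (Sym2 V)) {l : List (Sym2 V)}
    (hl : l.Nodup) : unmatchedWeight w M l = wsum w (l.toFinset \ M) := by
  unfold unmatchedWeight wsum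
  rw [← sum_filter_toFinset hl (fun e => decide (e ∉ M)) w]
  congr 1
  ext e
  simp

end Bridge

section F
variable [DecidableEq V]

def sgn (M : Finset (Sym2 V)) (e : Sym2 V) : ℤ := if e ∈ M then -1 else 1

def endC (M : Finset (Sym2 V)) (y : V) (oe : Option (Sym2 V)) (x : V) : ℤ :=
  oe.elim 0 (fun e => if x = y then sgn M e else 0)

@[simp] lemma endC_some (M : Finset (Sym2 V)) (y : V) (e : Sym2 V) (x : V) :
    endC M y (some e) x = if x = y then sgn M e else 0 := rfl

lemma fLem {G : SimpleGraph V} (M : Finset (Sym2 V)) :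
    ∀ {u v : V} (p : G.Walk u v), Alternating M p.edges →
    ∀ x, (cntB M p.edges x : ℤ) - cntA M p.edges x
      = endC M u p.edges.head? x + endC M v p.edges.getLast? x := by
  intro u v p
  induction p with
  | nil => intro _ x; simp [cntA, cntB, endC]
  | @cons u w v h q ih =>
    intro halt x
    have hne : u ≠ w := h.ne
    cases q with
    | nil =>
      by_cases hm : s(u,w) ∈ M <;> by_cases hxu : x = u <;> by_cases hxw : x = w <;>
        simp_all [cntA, cntB, endC, sgn, Sym2.mem_iff, List.countP_cons]
    | @cons w y v h' q'' =>
      simp only [SimpleGraph.Walk.edges_cons] at halt ih ⊢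
      obtain ⟨hR, halt'⟩ := List.isChain_cons_cons.1 halt
      have key := ih halt' x
      rw [List.getLast?_cons_cons]
      simp only [cntA, cntB, List.countP_cons] at key ⊢
      simp only [List.head?_cons, endC_some] at key ⊢
      by_cases hm : s(u,w) ∈ M
      · have hm2 : s(w,y) ∉ M := hR.mp hm
        by_cases hxu : x = u <;> by_cases hxw : x = w <;>
          simp [hxu, hxw, hm, hm2, hne, Ne.symm hne, sgn, Sym2.mem_iff] at key ⊢ <;> omega
      · have hm2 : s(w,y) ∈ M := by tauto
        by_cases hxu : x = u <;> by_cases hxw : x = w <;>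
          simp [hxu, hxw, hm, hm2, hne, Ne.symm hne, sgn, Sym2.mem_iff] at key ⊢ <;> omega
end F

section Grow
variable [DecidableEq V] {G : SimpleGraph V}

lemma alternating_reverse {M : Finset (Sym2 V)} {l : List (Sym2 V)}
    (h : Alternating M l) : Alternating M l.reverse := by
  unfold Alternating at *
  unfold List.Chain' at *; rw [List.isChain_reverse]
  exact h.imp (fun a b hab => by tauto)

/-- No alternating extension at the front endpoint using an unused edge of `S`. -/
def NoExt (G : SimpleGraph V) (M S : Finset (Sym2 V)) {u v : V} (p : G.Walk u v) : Prop :=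
  ∀ x : V, G.Adj x u → s(x,u) ∈ S → s(x,u) ∉ p.edges →
    ¬ (∀ f ∈ p.edges.head?, (s(x,u) ∈ M ↔ f ∉ M))

lemma grow (M S : Finset (Sym2 V)) :
    ∀ (n : ℕ) {u v : V} (p : G.Walk u v), (S \ p.edges.toFinset).card ≤ n →
    p.IsTrail → Alternating M p.edges → (∀ e ∈ p.edges, e ∈ S) →
    ∃ (u' : V) (q : G.Walk u' v) (ext : List (Sym2 V)),
      q.edges = ext ++ p.edges ∧ q.IsTrail ∧ Alternating M q.edges ∧
      (∀ e ∈ q.edges, e ∈ S) ∧ NoExt G M S q := by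
  intro n
  induction n with
  | zero =>
    intro u v p hcard ht halt hsub
    refine ⟨u, p, [], by simp, ht, halt, hsub, ?_⟩
    intro x hadj h1 h2 _
    have : s(x,u) ∈ S \ p.edges.toFinset := by
      simp [Finset.mem_sdiff, h1, h2]
    have := Finset.card_pos.2 ⟨_, this⟩
    omega
  | succ n ih =>
    intro u v p hcard ht halt hsub
    by_cases hex : ∃ x : V, ∃ _ : G.Adj x u, s(x,u) ∈ S ∧ s(x,u) ∉ p.edges ∧
        (∀ f ∈ p.edges.head?, (s(x,u) ∈ M ↔ f ∉ M))
    · obtain ⟨x, hadj, hmem, hnotin, hfront⟩ := hex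
      have hc' : (S \ (SimpleGraph.Walk.cons hadj p).edges.toFinset).card ≤ n := by
        have h1 : (SimpleGraph.Walk.cons hadj p).edges.toFinset
            = insert s(x,u) p.edges.toFinset := by simp
        rw [h1, Finset.sdiff_insert]
        have hm2 : s(x,u) ∈ S \ p.edges.toFinset := by
          simp [Finset.mem_sdiff, hmem, hnotin]
        rw [Finset.card_erase_of_mem hm2] at *
        omega
      have ht' : (SimpleGraph.Walk.cons hadj p).IsTrail :=
        (SimpleGraph.Walk.isTrail_cons hadj p).2 ⟨ht, hnotin⟩
      have halt' : Alternating M (SimpleGraph.Walk.cons hadj p).edges := by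
        rw [SimpleGraph.Walk.edges_cons]
        exact List.isChain_cons.2 ⟨hfront, halt⟩
      have hsub' : ∀ e ∈ (SimpleGraph.Walk.cons hadj p).edges, e ∈ S := by
        intro e he
        rw [SimpleGraph.Walk.edges_cons, List.mem_cons] at he
        rcases he with rfl | he
        · exact hmem
        · exact hsub e he
      obtain ⟨u', q, ext, heq, ht2, halt2, hsub2, hno2⟩ := ih _ hc' ht' halt' hsub'
      exact ⟨u', q, ext ++ [s(x,u)], by simp [heq], ht2, halt2, hsub2, hno2⟩
    · refine ⟨u, p, [], by simp, ht, halt, hsub, ?_⟩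
      intro x hadj h1 h2 h3
      exact hex ⟨x, hadj, h1, h2, h3⟩
end Grow

section MaxTrail
variable [DecidableEq V] {G : SimpleGraph V}

lemma noExt_of_superset {M S : Finset (Sym2 V)} {a b b' : V}
    {p : G.Walk a b} {q : G.Walk a b'}
    (hhead : q.edges.head? = p.edges.head?)
    (hsub : ∀ e ∈ p.edges, e ∈ q.edges)
    (hno : NoExt G M S p) : NoExt G M S q := by
  intro x hadj h1 h2 h3
  refine hno x hadj h1 (fun hc => h2 (hsub _ hc)) ?_
  rw [← hhead]
  exact h3

lemma exists_maximal_trail (M S : Finset (Sym2 V)) (hS : ∀ e ∈ S, e ∈ G.edgeSet)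
    (e0 : Sym2 V) (he0 : e0 ∈ S) :
    ∃ (a b : V) (p : G.Walk a b), p.IsTrail ∧ Alternating M p.edges ∧
      (∀ e ∈ p.edges, e ∈ S) ∧ e0 ∈ p.edges ∧ NoExt G M S p ∧ NoExt G M S p.reverse := by
  have he0G : e0 ∈ G.edgeSet := hS e0 he0
  revert he0 he0G
  induction e0 using Sym2.ind with
  | _ xx yy =>
  intro he0 he0G
  have hadj : G.Adj xx yy := he0G
  -- initial single-edge walk
  let p0 : G.Walk xx yy := SimpleGraph.Walk.cons hadj SimpleGraph.Walk.nil
  have hp0e : p0.edges = [s(xx,yy)] := by simp [p0]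
  have hp0t : p0.IsTrail := by
    rw [SimpleGraph.Walk.isTrail_def, hp0e]; simp
  have hp0a : Alternating M p0.edges := by rw [hp0e]; exact List.isChain_singleton _
  have hp0s : ∀ e ∈ p0.edges, e ∈ S := by rw [hp0e]; simpa using he0
  obtain ⟨a, q1, ext1, hq1e, hq1t, hq1a, hq1s, hq1no⟩ :=
    grow M S S.card p0 (Finset.card_le_card (Finset.sdiff_subset)) hp0t hp0a hp0s
  have hq1ne : q1.edges ≠ [] := by rw [hq1e, hp0e]; simp
  obtain ⟨b, q2, ext2, hq2e, hq2t, hq2a, hq2s, hq2no⟩ :=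
    grow M S S.card q1.reverse (Finset.card_le_card (Finset.sdiff_subset))
      hq1t.reverse (by rw [SimpleGraph.Walk.edges_reverse]; exact alternating_reverse hq1a)
      (by intro e he; rw [SimpleGraph.Walk.edges_reverse, List.mem_reverse] at he; exact hq1s e he)
  refine ⟨a, b, q2.reverse, hq2t.reverse, ?_, ?_, ?_, ?_, ?_⟩
  · rw [SimpleGraph.Walk.edges_reverse]; exact alternating_reverse hq2a
  · intro e he; rw [SimpleGraph.Walk.edges_reverse, List.mem_reverse] at he; exact hq2s e he
  · rw [SimpleGraph.Walk.edges_reverse, List.mem_reverse, hq2e,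
      SimpleGraph.Walk.edges_reverse]
    refine List.mem_append_right _ ?_
    rw [List.mem_reverse, hq1e, hp0e]
    simp
  · -- NoExt at front a : q2.reverse has front a, compare with q1
    refine noExt_of_superset (p := q1) ?_ ?_ hq1no
    · rw [SimpleGraph.Walk.edges_reverse, hq2e, SimpleGraph.Walk.edges_reverse,
        List.reverse_append, List.reverse_reverse]
      exact List.head?_append_of_ne_nil _ hq1ne
    · intro e he
      rw [SimpleGraph.Walk.edges_reverse, hq2e, SimpleGraph.Walk.edges_reverse,
        List.reverse_append, List.reverse_reverse]
      exact List.mem_append_left _ he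
  · -- NoExt at front b : q2.reverse.reverse = q2
    rw [SimpleGraph.Walk.reverse_reverse]
    exact hq2no
end MaxTrail


section Main
variable [DecidableEq V] {G : SimpleGraph V}

lemma endC_bounds (M : Finset (Sym2 V)) (y : V) (oe : Option (Sym2 V)) (x : V) :
    endC M y oe x ≤ 1 ∧ -1 ≤ endC M y oe x := by
  cases oe <;> simp [endC, sgn] <;> split_ifs <;> omega

lemma endC_neg {M : Finset (Sym2 V)} {y : V} {oe : Option (Sym2 V)} {x : V}
    (h : endC M y oe x < 0) : x = y ∧ ∃ e, oe = some e ∧ e ∈ M := by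
  cases oe with
  | none => simp [endC] at h
  | some e =>
    simp only [endC_some, sgn] at h
    split_ifs at h with h1 h2
    · exact ⟨h1, e, rfl, h2⟩
    · omega
    · omega

lemma exists_adj_of_mem_edge {e : Sym2 V} (heG : e ∈ G.edgeSet) {a : V} (ha : a ∈ e) :
    ∃ x, G.Adj x a ∧ e = s(x,a) := by
  revert heG ha
  induction e using Sym2.ind with
  | _ u v =>
    intro heG ha
    rw [Sym2.mem_iff] at ha
    rcases ha with rfl | rfl
    · exact ⟨v, (heG : G.Adj a v).symm, Sym2.eq_swap⟩
    · exact ⟨u, heG, rfl⟩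

lemma noExt_all_in {M S : Finset (Sym2 V)} {a v : V} {p : G.Walk a v}
    (hno : NoExt G M S p) (hS : ∀ e ∈ S, e ∈ G.edgeSet) {f0 : Sym2 V}
    (hh : p.edges.head? = some f0) {e : Sym2 V} (heS : e ∈ S) (hax : a ∈ e)
    (hiff : (e ∈ M ↔ f0 ∉ M)) : e ∈ p.edges := by
  by_contra hne
  obtain ⟨x, hadj, rfl⟩ := exists_adj_of_mem_edge (hS e heS) hax
  refine hno x hadj heS hne ?_
  intro f hf
  rw [hh] at hf
  cases hf
  exact hiff

lemma degOn_inter_of_sat {C F : Finset (Sym2 V)} {x : V}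
    (h : ∀ e ∈ C, x ∈ e → e ∈ F) : degOn (C ∩ F) x = degOn C x := by
  unfold degOn
  congr 1
  ext e
  simp only [Finset.mem_filter, Finset.mem_inter]
  exact ⟨fun ⟨⟨h1, _⟩, h3⟩ => ⟨h1, h3⟩, fun ⟨h1, h3⟩ => ⟨⟨h1, h e h1 h3⟩, h3⟩⟩

end Main

section Main2
variable [DecidableEq V] {G : SimpleGraph V}

lemma inter_M_eq {M A B : Finset (Sym2 V)} {l : List (Sym2 V)}
    (hAM : ∀ e ∈ A, e ∈ M) (hBM : ∀ e ∈ B, e ∉ M)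
    (hsub : ∀ e ∈ l, e ∈ A ∪ B) :
    l.toFinset ∩ M = l.toFinset ∩ A := by
  ext e
  simp only [Finset.mem_inter, List.mem_toFinset]
  constructor
  · rintro ⟨h1, h2⟩
    refine ⟨h1, ?_⟩
    rcases Finset.mem_union.1 (hsub e h1) with h | h
    · exact h
    · exact absurd h2 (hBM e h)
  · rintro ⟨h1, h2⟩
    exact ⟨h1, hAM e h2⟩

lemma sdiff_M_eq {M A B : Finset (Sym2 V)} {l : List (Sym2 V)}
    (hAM : ∀ e ∈ A, e ∈ M) (hBM : ∀ e ∈ B, e ∉ M)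
    (hsub : ∀ e ∈ l, e ∈ A ∪ B) :
    l.toFinset \ M = l.toFinset ∩ B := by
  ext e
  simp only [Finset.mem_sdiff, Finset.mem_inter, List.mem_toFinset]
  constructor
  · rintro ⟨h1, h2⟩
    refine ⟨h1, ?_⟩
    rcases Finset.mem_union.1 (hsub e h1) with h | h
    · exact absurd (hAM e h) h2
    · exact h
  · rintro ⟨h1, h2⟩
    exact ⟨h1, hBM e h2⟩

lemma endpoint_bound {M A B : Finset (Sym2 V)} {c : V → ℕ}
    (hMc : ∀ x, degOn M x ≤ c x)
    (hAM : ∀ e ∈ A, e ∈ M) (hBM : ∀ e ∈ B, e ∉ M)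
    (hSG : ∀ e ∈ A ∪ B, e ∈ G.edgeSet)
    (hInv : ∀ x, degOn M x + degOn B x ≤ c x + degOn A x)
    {a b : V} (p : G.Walk a b) (ht : p.IsTrail) (halt : Alternating M p.edges)
    (hsub : ∀ e ∈ p.edges, e ∈ A ∪ B) (hno : NoExt G M (A ∪ B) p) :
    degOn (symmDiffE M p.edges.toFinset) a ≤ c a := by
  have hl : p.edges.Nodup := ht.edges_nodup
  cases hhd : p.edges.head? with
  | none =>
    rw [List.head?_eq_none_iff] at hhd
    rw [hhd]
    simp only [List.toFinset_nil]
    have : symmDiffE M ∅ = M := by simp [symmDiffE]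
    rw [this]
    exact hMc a
  | some f0 =>
    have hId := degOn_symmDiffE M p.edges.toFinset a
    have hcA := degOn_inter_eq_cntA M hl a
    have hcB := degOn_sdiff_eq_cntB M hl a
    by_cases hf0 : f0 ∈ M
    · -- matched first edge: cntB ≤ cntA at a
      have hF := fLem M p halt a
      rw [hhd] at hF
      simp only [endC_some, if_pos rfl, sgn, if_pos hf0, if_true] at hF
      have hE := (endC_bounds M b p.edges.getLast? a).1
      have hle : cntB M p.edges a ≤ cntA M p.edges a := by omega
      have := hMc a
      omega
    · -- unmatched first edge: all A-edges at a are in the trail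
      have hsat : ∀ e ∈ A, a ∈ e → e ∈ p.edges := by
        intro e heA hae
        exact noExt_all_in hno hSG hhd (Finset.mem_union_left _ heA) hae
          (iff_of_true (hAM e heA) hf0)
      have hFM : p.edges.toFinset ∩ M = p.edges.toFinset ∩ A := inter_M_eq hAM hBM hsub
      have hAd : degOn (A ∩ p.edges.toFinset) a = degOn A a :=
        degOn_inter_of_sat (fun e he hx => List.mem_toFinset.2 (hsat e he hx))
      have h1 : degOn (p.edges.toFinset ∩ M) a = degOn A a := by
        rw [hFM, Finset.inter_comm]; exact hAd
      have h2 : degOn (p.edges.toFinset \ M) a ≤ degOn B a := by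
        rw [sdiff_M_eq hAM hBM hsub]
        exact degOn_mono (Finset.inter_subset_right) a
      have := hInv a
      omega

lemma inv_step {M A B : Finset (Sym2 V)} {c : V → ℕ}
    (hMc : ∀ x, degOn M x ≤ c x)
    (hAM : ∀ e ∈ A, e ∈ M) (hBM : ∀ e ∈ B, e ∉ M)
    (hSG : ∀ e ∈ A ∪ B, e ∈ G.edgeSet)
    (hInv : ∀ x, degOn M x + degOn B x ≤ c x + degOn A x)
    {a b : V} (p : G.Walk a b) (ht : p.IsTrail) (halt : Alternating M p.edges)
    (hsub : ∀ e ∈ p.edges, e ∈ A ∪ B) (hno : NoExt G M (A ∪ B) p)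
    (hnoR : NoExt G M (A ∪ B) p.reverse) (x : V) :
    degOn M x + degOn (B \ p.edges.toFinset) x ≤ c x + degOn (A \ p.edges.toFinset) x := by
  have hl : p.edges.Nodup := ht.edges_nodup
  have hA1 := degOn_sdiff_add A p.edges.toFinset x
  have hB1 := degOn_sdiff_add B p.edges.toFinset x
  have hcA := degOn_inter_eq_cntA M hl x
  have hcB := degOn_sdiff_eq_cntB M hl x
  have hFM : p.edges.toFinset ∩ M = p.edges.toFinset ∩ A := inter_M_eq hAM hBM hsub
  have hFB : p.edges.toFinset \ M = p.edges.toFinset ∩ B := sdiff_M_eq hAM hBM hsub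
  have hAF : degOn (A ∩ p.edges.toFinset) x = cntA M p.edges x := by
    rw [Finset.inter_comm, ← hFM]; exact hcA
  have hBF : degOn (B ∩ p.edges.toFinset) x = cntB M p.edges x := by
    rw [Finset.inter_comm, ← hFB]; exact hcB
  by_cases hcase : cntA M p.edges x ≤ cntB M p.edges x
  · have := hInv x
    omega
  · -- some end of the trail is at x with a matched end edge
    have hF := fLem M p halt x
    have hneg : endC M a p.edges.head? x < 0 ∨ endC M b p.edges.getLast? x < 0 := by
      by_contra hcon
      push_neg at hcon
      omega
    have hsatB : ∀ e ∈ B, x ∈ e → e ∈ p.edges := by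
      rcases hneg with hn | hn
      · obtain ⟨rfl, f, hf, hfM⟩ := endC_neg hn
        intro e heB hxe
        exact noExt_all_in hno hSG hf (Finset.mem_union_right _ heB) hxe
          (iff_of_false (hBM e heB) (not_not_intro hfM))
      · obtain ⟨rfl, f, hf, hfM⟩ := endC_neg hn
        intro e heB hxe
        have hh : p.reverse.edges.head? = some f := by
          rw [SimpleGraph.Walk.edges_reverse, List.head?_reverse]
          exact hf
        have := noExt_all_in hnoR hSG hh (Finset.mem_union_right _ heB) hxe
          (iff_of_false (hBM e heB) (not_not_intro hfM))
        rw [SimpleGraph.Walk.edges_reverse, List.mem_reverse] at this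
        exact this
    have hBd : degOn (B ∩ p.edges.toFinset) x = degOn B x :=
      degOn_inter_of_sat (fun e he hx => List.mem_toFinset.2 (hsatB e he hx))
    have := hMc x
    omega

end Main2

section Main3
variable [DecidableEq V]

lemma exists_aug (G : SimpleGraph V) (w : Sym2 V → ℝ) (hw : ∀ e, 0 ≤ w e) (c : V → ℕ)
    (M : Finset (Sym2 V)) (hMc : ∀ x, degOn M x ≤ c x) :
    ∀ (n : ℕ) (A B : Finset (Sym2 V)), B.card ≤ n →
    (∀ e ∈ A, e ∈ M) → (∀ e ∈ B, e ∉ M) →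
    (∀ e ∈ A ∪ B, e ∈ G.edgeSet) →
    (∀ x, degOn M x + degOn B x ≤ c x + degOn A x) →
    wsum w A < wsum w B →
    ∃ (u v : V) (p : G.Walk u v), p.IsTrail ∧ Alternating M p.edges ∧
      Augmenting w M p.edges ∧
      degOn (symmDiffE M p.edges.toFinset) u ≤ c u ∧
      degOn (symmDiffE M p.edges.toFinset) v ≤ c v := by
  intro n
  induction n with
  | zero =>
    intro A B hcard _ _ _ _ hlt
    rw [Nat.le_zero, Finset.card_eq_zero] at hcard
    subst hcard
    have : wsum w (∅ : Finset (Sym2 V)) = 0 := Finset.sum_empty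
    have := wsum_nonneg hw A
    linarith
  | succ n ih =>
    intro A B hcard hAM hBM hSG hInv hlt
    have hBne : B.Nonempty := by
      by_contra h
      rw [Finset.not_nonempty_iff_eq_empty] at h
      subst h
      have : wsum w (∅ : Finset (Sym2 V)) = 0 := Finset.sum_empty
      have := wsum_nonneg hw A
      linarith
    obtain ⟨e0, he0⟩ := hBne
    obtain ⟨a, b, p, ht, halt, hsubS, he0p, hno, hnoR⟩ :=
      exists_maximal_trail M (A ∪ B) hSG e0 (Finset.mem_union_right _ he0)
    have hl := ht.edges_nodup
    by_cases haug : matchedWeight w M p.edges < unmatchedWeight w M p.edges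
    · refine ⟨a, b, p, ht, halt, haug, ?_, ?_⟩
      · exact endpoint_bound hMc hAM hBM hSG hInv p ht halt hsubS hno
      · have hrev := endpoint_bound hMc hAM hBM hSG hInv p.reverse ht.reverse
          (by rw [SimpleGraph.Walk.edges_reverse]; exact alternating_reverse halt)
          (by intro e he; rw [SimpleGraph.Walk.edges_reverse, List.mem_reverse] at he
              exact hsubS e he) hnoR
        rwa [SimpleGraph.Walk.edges_reverse, List.toFinset_reverse] at hrev
    · push_neg at haug
      have hFM : p.edges.toFinset ∩ M = p.edges.toFinset ∩ A := inter_M_eq hAM hBM hsubS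
      have hFB : p.edges.toFinset \ M = p.edges.toFinset ∩ B := sdiff_M_eq hAM hBM hsubS
      have hcard' : (B \ p.edges.toFinset).card ≤ n := by
        have h1 := Finset.card_sdiff_add_card_inter B p.edges.toFinset
        have h2 : e0 ∈ B ∩ p.edges.toFinset :=
          Finset.mem_inter.2 ⟨he0, List.mem_toFinset.2 he0p⟩
        have h3 := Finset.card_pos.2 ⟨_, h2⟩
        omega
      refine ih (A \ p.edges.toFinset) (B \ p.edges.toFinset) hcard'
        (fun e he => hAM e (Finset.mem_sdiff.1 he).1)
        (fun e he => hBM e (Finset.mem_sdiff.1 he).1)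
        (fun e he => by
          rcases Finset.mem_union.1 he with h | h
          · exact hSG e (Finset.mem_union_left _ (Finset.mem_sdiff.1 h).1)
          · exact hSG e (Finset.mem_union_right _ (Finset.mem_sdiff.1 h).1))
        (inv_step hMc hAM hBM hSG hInv p ht halt hsubS hno hnoR) ?_
      have hwA := wsum_sdiff_add w A p.edges.toFinset
      have hwB := wsum_sdiff_add w B p.edges.toFinset
      have hmw : matchedWeight w M p.edges = wsum w (A ∩ p.edges.toFinset) := by
        rw [matchedWeight_eq w M hl, hFM, Finset.inter_comm]
      have humw : unmatchedWeight w M p.edges = wsum w (B ∩ p.edges.toFinset) := by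
        rw [unmatchedWeight_eq w M hl, hFB, Finset.inter_comm]
      linarith

lemma endC_of_ne {M : Finset (Sym2 V)} {y x : V} (h : x ≠ y) (oe : Option (Sym2 V)) :
    endC M y oe x = 0 := by
  cases oe <;> simp [endC, h]

end Main3

/-- a `c`-matching is maximum-weight iff there is no proper `M`-augmenting trail. -/
theorem stmt1 [Fintype V] [DecidableEq V] (G : SimpleGraph V) (w : Sym2 V → ℝ)
    (hw : ∀ e, 0 ≤ w e) (c : V → ℕ) (M : Finset (Sym2 V)) (hM : IsCMatching G c M) :
    IsMaxCMatching G w c M ↔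
      ¬ ∃ (u v : V) (p : G.Walk u v), p.IsTrail ∧
          Alternating M p.edges ∧ Augmenting w M p.edges ∧
          degOn (symmDiffE M p.edges.toFinset) u ≤ c u ∧
          degOn (symmDiffE M p.edges.toFinset) v ≤ c v := by
  constructor
  · rintro ⟨_, hmax⟩ ⟨u, v, p, ht, halt, haug, hdu, hdv⟩
    have hl := ht.edges_nodup
    have hN : IsCMatching G c (symmDiffE M p.edges.toFinset) := by
      constructor
      · intro e he
        rcases Finset.mem_union.1 he with h | h
        · exact hM.1 e (Finset.mem_sdiff.1 h).1
        · exact p.edges_subset_edgeSet (List.mem_toFinset.1 (Finset.mem_sdiff.1 h).1)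
      · intro x
        by_cases hxu : x = u
        · subst hxu; exact hdu
        by_cases hxv : x = v
        · subst hxv; exact hdv
        have hF := fLem M p halt x
        rw [endC_of_ne hxu, endC_of_ne hxv] at hF
        have hId := degOn_symmDiffE M p.edges.toFinset x
        have hcA := degOn_inter_eq_cntA M hl x
        have hcB := degOn_sdiff_eq_cntB M hl x
        have := hM.2 x
        omega
    have hwlt : wsum w M < wsum w (symmDiffE M p.edges.toFinset) := by
      have h1 : wsum w (symmDiffE M p.edges.toFinset) = wsum w (M \ p.edges.toFinset) + wsum w (p.edges.toFinset \ M) := by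
        unfold symmDiffE
        exact wsum_union_of_disjoint w (by
          refine Finset.disjoint_left.2 ?_
          intro e he1 he2
          exact (Finset.mem_sdiff.1 he2).2 (Finset.mem_sdiff.1 he1).1)
      have h2 := wsum_sdiff_add w M p.edges.toFinset
      have h3 : matchedWeight w M p.edges = wsum w (M ∩ p.edges.toFinset) := by
        rw [matchedWeight_eq w M hl, Finset.inter_comm]
      have h4 : unmatchedWeight w M p.edges = wsum w (p.edges.toFinset \ M) :=
        unmatchedWeight_eq w M hl
      have := haug
      unfold Augmenting at this
      linarith
    exact absurd (hmax _ hN) (not_le.2 hwlt)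
  · intro hno
    refine ⟨hM, ?_⟩
    intro N hN
    by_contra hlt
    push_neg at hlt
    refine hno ?_
    refine exists_aug G w hw c M hM.2 (N \ M).card (M \ N) (N \ M) le_rfl
      (fun e he => (Finset.mem_sdiff.1 he).1)
      (fun e he => (Finset.mem_sdiff.1 he).2)
      (fun e he => by
        rcases Finset.mem_union.1 he with h | h
        · exact hM.1 e (Finset.mem_sdiff.1 h).1
        · exact hN.1 e (Finset.mem_sdiff.1 h).1) ?_ ?_
    · intro x
      have h1 := degOn_sdiff_add M N x
      have h2 := degOn_sdiff_add N M x
      have h3 : degOn (M ∩ N) x = degOn (N ∩ M) x := by rw [Finset.inter_comm]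
      have := hN.2 x
      omega
    · have h1 := wsum_sdiff_add w M N
      have h2 := wsum_sdiff_add w N M
      have h3 : wsum w (M ∩ N) = wsum w (N ∩ M) := by rw [Finset.inter_comm]
      linarith
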